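/- Let d_1 ≤ d_2 ≤ ... ≤ d_n be positive integers, all of the form c·2^{ℓ_k} for a fixed positive integer c (i.e., d_k = c·2^{ℓ_k} with ℓ_k ≥ 0, and the ℓ_k nondecreasing). If the sum of reciprocals 1/d_1 + ... + 1/d_n > 1, then there exists m with 1 ≤ m < n such that 1/d_1 + ... + 1/d_m = 1 exactly. -/

import Mathlib

/-- If `d_1 ≤ … ≤ d_n` are all of the form `c·2^ℓ` and the sum of reciprocals exceeds 1,
then some proper partial sum of reciprocals is exactly 1. -/
theorem stmt2 (n c : ℕ) (hc : 0 < c) (hn : 1 ≤ n) (ℓ : ℕ → ℕ) (d : ℕ → ℕ)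
    (hd : ∀ k < n, d k = c * 2 ^ ℓ k)
    (hmono : ∀ j k, j ≤ k → k < n → d j ≤ d k)
    (hsum : 1 < ∑ k ∈ Finset.range n, (1 : ℝ) / d k) :
    ∃ m : ℕ, 1 ≤ m ∧ m < n ∧ ∑ k ∈ Finset.range m, (1 : ℝ) / d k = 1 := by
  classical
  have hd0 : ∀ k, k < n → 0 < d k := by
    intro k hk; rw [hd k hk]; positivity
  set S : ℕ → ℝ := fun t => ∑ k ∈ Finset.range t, (1 : ℝ) / d k with hSdef
  have hP : ∃ t, 1 < S t := ⟨n, hsum⟩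
  set t := Nat.find hP with ht
  have htP : 1 < S t := Nat.find_spec hP
  have htn : t ≤ n := by
    by_contra h
    push_neg at h
    exact Nat.find_min hP h hsum
  have h2 : 2 ≤ t := by
    by_contra h
    push_neg at h
    interval_cases t
    · simp only [hSdef, Finset.range_zero, Finset.sum_empty] at htP
      linarith
    · have h0 : (0:ℕ) < n := hn
      have : (1:ℝ) ≤ d 0 := by
        exact_mod_cast Nat.one_le_iff_ne_zero.mpr (hd0 0 h0).ne'
      have hle : S 1 ≤ 1 := by
        simp only [hSdef, Finset.sum_range_one]
        rw [div_le_one (by linarith)]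
        linarith
      linarith
  set m := t - 1 with hm
  have hm1 : 1 ≤ m := by omega
  have hmt : m + 1 = t := by omega
  have hmn : m < n := by omega
  have hSm : S m ≤ 1 := by
    have := Nat.find_min hP (show m < t by omega)
    push_neg at this
    exact this
  have hSm1 : 1 < S m + 1 / d m := by
    have : S (m + 1) = S m + 1 / d m := by
      simp [hSdef, Finset.sum_range_succ]
    rw [← this, hmt]; exact htP
  set j := m - 1 with hj
  have hjm : j + 1 = m := by omega
  have hjn : j < n := by omega
  -- ℓ monotone up to j
  have hℓ : ∀ k, k < m → ℓ k ≤ ℓ j := by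
    intro k hk
    have hkj : k ≤ j := by omega
    have := hmono k j hkj hjn
    rw [hd k (by omega), hd j hjn] at this
    have h2 : (2:ℕ) ^ ℓ k ≤ 2 ^ ℓ j := Nat.le_of_mul_le_mul_left this hc
    exact (Nat.pow_le_pow_iff_right (by norm_num)).mp h2
  set A : ℕ := ∑ k ∈ Finset.range m, 2 ^ (ℓ j - ℓ k) with hA
  have hkey : (A : ℝ) = (d j : ℝ) * S m := by
    rw [hA, hSdef]
    push_cast
    rw [Finset.mul_sum]
    apply Finset.sum_congr rfl
    intro k hk
    have hkm : k < m := Finset.mem_range.mp hk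
    have hkn : k < n := by omega
    have hdk : (0:ℝ) < d k := by exact_mod_cast hd0 k hkn
    rw [mul_one_div, eq_div_iff hdk.ne']
    have : (2:ℕ) ^ (ℓ j - ℓ k) * d k = d j := by
      rw [hd k hkn, hd j hjn, ← mul_assoc, mul_comm _ c, mul_assoc, ← pow_add,
        Nat.sub_add_cancel (hℓ k hkm)]
    exact_mod_cast this
  have hdj0 : (0:ℝ) < d j := by exact_mod_cast hd0 j hjn
  have hdm0 : (0:ℝ) < d m := by exact_mod_cast hd0 m hmn
  have hdjm : (d j : ℝ) ≤ d m := by exact_mod_cast hmono j m (by omega) hmn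
  -- upper bound: A ≤ d j
  have hub : (A : ℝ) ≤ d j := by
    rw [hkey]
    nlinarith
  -- lower bound: A > d j - 1
  have hlb : (d j : ℝ) - 1 < A := by
    rw [hkey]
    have h1 : 1 - 1 / (d m : ℝ) < S m := by linarith
    have h2 : (d j : ℝ) / d m ≤ 1 := by
      rw [div_le_one hdm0]; exact hdjm
    have h3 : (d j : ℝ) * (1 - 1 / d m) = d j - d j / d m := by
      field_simp
    nlinarith
  have hAeq : (A : ℝ) = d j := by
    have h1 : A ≤ d j := by exact_mod_cast hub
    have h2 : d j ≤ A := by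
      by_contra h
      push_neg at h
      have : (A : ℝ) + 1 ≤ d j := by exact_mod_cast h
      linarith
    exact_mod_cast le_antisymm h1 h2
  refine ⟨m, hm1, hmn, ?_⟩
  have : (d j : ℝ) * S m = (d j : ℝ) * 1 := by rw [← hkey, hAeq, mul_one]
  have := mul_left_cancel₀ hdj0.ne' this
  simpa [hSdef] using this
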